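/- Let a, b, s, t, n be positive integers with s + t = n, and set k = a + b + 1. Let A and B be disjoint finite point sets in ℝ² with A ∪ B in general position, |A| = na + s, and |B| = nb + t. Suppose that there is no open halfplane containing exactly a points of A and exactly b + 1 points of B, and no open halfplane containing exactly a + 1 points of A and exactly b points of B. Then the following two statements are equivalent: (i) every open halfplane containing exactly a points of A contains fewer than b + 1 points of B; (ii) every open halfplane containing exactly a + 1 points of A contains fewer than b points of B. -/

import Mathlib

open RealInnerProductSpace

noncomputable instance (d : ℕ) : DecidableEq (EuclideanSpace ℝ (Fin d)) := Classical.decEq _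

/-- A finite point set in `ℝ^d` is in general position if every subset
of size at most `d + 1` is affinely independent. -/
def GenPos (d : ℕ) (X : Finset (EuclideanSpace ℝ (Fin d))) : Prop :=
  ∀ S : Finset (EuclideanSpace ℝ (Fin d)), S ⊆ X → S.card ≤ d + 1 →
    AffineIndependent ℝ (fun p : S => (p : EuclideanSpace ℝ (Fin d)))

section Sweep

variable {α : Type*} [DecidableEq α]

/-- Sweeping step, shrinking the halfplane: removes exactly the minimal point. -/
lemma sweep_step_down {A B : Finset α} {f : α → ℝ}
    (hinj : ∀ x ∈ A ∪ B, ∀ y ∈ A ∪ B, f x = f y → x = y) {c : ℝ}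
    (hne : ((A ∪ B).filter (fun x => c < f x)).Nonempty) :
    ∃ x₀ ∈ A ∪ B, c < f x₀ ∧ ∃ c' : ℝ,
      ∀ x ∈ A ∪ B, (c' < f x ↔ (c < f x ∧ x ≠ x₀)) := by
  obtain ⟨x₀, hx₀S, hmin⟩ := Finset.exists_min_image _ f hne
  rw [Finset.mem_filter] at hx₀S
  refine ⟨x₀, hx₀S.1, hx₀S.2, f x₀, fun x hx => ?_⟩
  constructor
  · intro h
    exact ⟨hx₀S.2.trans h, fun he => by subst he; exact lt_irrefl _ h⟩
  · rintro ⟨hcx, hne'⟩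
    have hle := hmin x (Finset.mem_filter.mpr ⟨hx, hcx⟩)
    rcases hle.lt_or_eq with h | h
    · exact h
    · exact absurd (hinj x₀ hx₀S.1 x hx h).symm hne'

/-- Sweeping step, growing the halfplane: adds exactly the maximal outside point. -/
lemma sweep_step_up {A B : Finset α} {f : α → ℝ}
    (hinj : ∀ x ∈ A ∪ B, ∀ y ∈ A ∪ B, f x = f y → x = y) {c : ℝ}
    (hne : ((A ∪ B).filter (fun x => f x ≤ c)).Nonempty) :
    ∃ x₀ ∈ A ∪ B, f x₀ ≤ c ∧ ∃ c' : ℝ,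
      ∀ x ∈ A ∪ B, (c' < f x ↔ (c < f x ∨ x = x₀)) := by
  obtain ⟨x₀, hx₀T, hmax⟩ := Finset.exists_max_image _ f hne
  rw [Finset.mem_filter] at hx₀T
  set T := (A ∪ B).filter (fun x => f x ≤ c) with hT
  by_cases hT' : (T.erase x₀).Nonempty
  · obtain ⟨y₀, hy₀T', hmax'⟩ := Finset.exists_max_image _ f hT'
    have hy₀ne : y₀ ≠ x₀ := (Finset.mem_erase.mp hy₀T').1
    have hy₀T : y₀ ∈ T := (Finset.mem_erase.mp hy₀T').2
    have hy₀W : y₀ ∈ A ∪ B := (Finset.mem_filter.mp hy₀T).1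
    have hy₀lt : f y₀ < f x₀ := by
      rcases (hmax y₀ hy₀T).lt_or_eq with h | h
      · exact h
      · exact absurd (hinj y₀ hy₀W x₀ hx₀T.1 h) hy₀ne
    refine ⟨x₀, hx₀T.1, hx₀T.2, f y₀, fun x hx => ?_⟩
    constructor
    · intro h
      by_cases hcx : c < f x
      · exact Or.inl hcx
      · have hxT : x ∈ T := Finset.mem_filter.mpr ⟨hx, le_of_not_gt hcx⟩
        by_cases hxx₀ : x = x₀
        · exact Or.inr hxx₀
        · have := hmax' x (Finset.mem_erase.mpr ⟨hxx₀, hxT⟩)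
          exact absurd h (not_lt.mpr this)
    · rintro (h | h)
      · have : f y₀ ≤ c := (Finset.mem_filter.mp hy₀T).2
        linarith
      · subst h; exact hy₀lt
  · -- T = {x₀}
    refine ⟨x₀, hx₀T.1, hx₀T.2, f x₀ - 1, fun x hx => ?_⟩
    constructor
    · intro h
      by_cases hcx : c < f x
      · exact Or.inl hcx
      · have hxT : x ∈ T := Finset.mem_filter.mpr ⟨hx, le_of_not_gt hcx⟩
        by_cases hxx₀ : x = x₀
        · exact Or.inr hxx₀
        · exact absurd ⟨x, Finset.mem_erase.mpr ⟨hxx₀, hxT⟩⟩ hT'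
    · rintro (h | h)
      · have : f x₀ ≤ c := hx₀T.2
        linarith
      · subst h; linarith

/-- Shrinking sweep: from a halfplane with `a+1` points of `A` and `≥ b+1` points of `B`,
assuming no halfplane has exactly `a+1` of `A` and exactly `b` of `B`, reach a halfplane
with exactly `a` of `A` and still `≥ b+1` of `B`. -/
lemma sweep_shrink {A B : Finset α} (hd : Disjoint A B) {f : α → ℝ}
    (hinj : ∀ x ∈ A ∪ B, ∀ y ∈ A ∪ B, f x = f y → x = y) {a b : ℕ}
    (hno : ∀ c : ℝ, ¬((A.filter (fun x => c < f x)).card = a + 1 ∧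
      (B.filter (fun x => c < f x)).card = b)) :
    ∀ β : ℕ, ∀ c : ℝ, (A.filter (fun x => c < f x)).card = a + 1 →
      (B.filter (fun x => c < f x)).card = β → b + 1 ≤ β →
      ∃ c', (A.filter (fun x => c' < f x)).card = a ∧
        b + 1 ≤ (B.filter (fun x => c' < f x)).card := by
  intro β
  induction β using Nat.strong_induction_on with
  | _ β ih =>
    intro c hfa hfb hβ
    have hAne : (A.filter (fun x => c < f x)).Nonempty := by
      rw [← Finset.card_pos, hfa]; omega
    obtain ⟨z, hz⟩ := hAne
    rw [Finset.mem_filter] at hz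
    have hne : ((A ∪ B).filter (fun x => c < f x)).Nonempty :=
      ⟨z, Finset.mem_filter.mpr ⟨Finset.mem_union_left _ hz.1, hz.2⟩⟩
    obtain ⟨x₀, hx₀W, hcx₀, c', hiff⟩ := sweep_step_down hinj hne
    rcases Finset.mem_union.mp hx₀W with hx₀A | hx₀B
    · -- the removed point is in A
      have hAeq : A.filter (fun x => c' < f x) = (A.filter (fun x => c < f x)).erase x₀ := by
        ext x
        simp only [Finset.mem_erase, Finset.mem_filter]
        constructor
        · intro ⟨hxA, h⟩
          have := (hiff x (Finset.mem_union_left _ hxA)).mp h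
          exact ⟨this.2, hxA, this.1⟩
        · intro ⟨hne', hxA, h⟩
          exact ⟨hxA, (hiff x (Finset.mem_union_left _ hxA)).mpr ⟨h, hne'⟩⟩
      have hBeq : B.filter (fun x => c' < f x) = B.filter (fun x => c < f x) := by
        ext x
        simp only [Finset.mem_filter]
        constructor
        · intro ⟨hxB, h⟩
          exact ⟨hxB, ((hiff x (Finset.mem_union_right _ hxB)).mp h).1⟩
        · intro ⟨hxB, h⟩
          have hxne : x ≠ x₀ := by
            rintro rfl
            exact (Finset.disjoint_left.mp hd hx₀A) hxB
          exact ⟨hxB, (hiff x (Finset.mem_union_right _ hxB)).mpr ⟨h, hxne⟩⟩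
      refine ⟨c', ?_, ?_⟩
      · rw [hAeq, Finset.card_erase_of_mem (Finset.mem_filter.mpr ⟨hx₀A, hcx₀⟩), hfa]; omega
      · rw [hBeq, hfb]; exact hβ
    · -- the removed point is in B
      have hAeq : A.filter (fun x => c' < f x) = A.filter (fun x => c < f x) := by
        ext x
        simp only [Finset.mem_filter]
        constructor
        · intro ⟨hxA, h⟩
          exact ⟨hxA, ((hiff x (Finset.mem_union_left _ hxA)).mp h).1⟩
        · intro ⟨hxA, h⟩
          have hxne : x ≠ x₀ := by
            rintro rfl
            exact (Finset.disjoint_left.mp hd hxA) hx₀B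
          exact ⟨hxA, (hiff x (Finset.mem_union_left _ hxA)).mpr ⟨h, hxne⟩⟩
      have hBeq : B.filter (fun x => c' < f x) = (B.filter (fun x => c < f x)).erase x₀ := by
        ext x
        simp only [Finset.mem_erase, Finset.mem_filter]
        constructor
        · intro ⟨hxB, h⟩
          have := (hiff x (Finset.mem_union_right _ hxB)).mp h
          exact ⟨this.2, hxB, this.1⟩
        · intro ⟨hne', hxB, h⟩
          exact ⟨hxB, (hiff x (Finset.mem_union_right _ hxB)).mpr ⟨h, hne'⟩⟩
      have hfa' : (A.filter (fun x => c' < f x)).card = a + 1 := by rw [hAeq]; exact hfa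
      have hfb' : (B.filter (fun x => c' < f x)).card = β - 1 := by
        rw [hBeq, Finset.card_erase_of_mem (Finset.mem_filter.mpr ⟨hx₀B, hcx₀⟩), hfb]
      have hβb : β - 1 ≠ b := by
        intro h
        exact hno c' ⟨hfa', by rw [hfb', h]⟩
      have : b + 1 ≤ β - 1 := by omega
      exact ih (β - 1) (by omega) c' hfa' hfb' this

/-- Growing sweep: from a halfplane with `a` points of `A` and `≥ b+1` points of `B`,
if `a + 1 ≤ |A|`, reach a halfplane with exactly `a+1` of `A` and still `≥ b+1` of `B`. -/
lemma sweep_grow {A B : Finset α} (hd : Disjoint A B) {f : α → ℝ}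
    (hinj : ∀ x ∈ A ∪ B, ∀ y ∈ A ∪ B, f x = f y → x = y) {a b : ℕ}
    (hcard : a + 1 ≤ A.card) :
    ∀ γ : ℕ, ∀ β : ℕ, ∀ c : ℝ, B.card - β = γ →
      (A.filter (fun x => c < f x)).card = a →
      (B.filter (fun x => c < f x)).card = β → b + 1 ≤ β →
      ∃ c', (A.filter (fun x => c' < f x)).card = a + 1 ∧
        b + 1 ≤ (B.filter (fun x => c' < f x)).card := by
  intro γ
  induction γ using Nat.strong_induction_on with
  | _ γ ih =>
    intro β c hγ hfa hfb hβ
    -- there is a point outside the halfplane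
    have hcards : ((A ∪ B).filter (fun x => c < f x)).card < (A ∪ B).card := by
      have hfe : (A ∪ B).filter (fun x => c < f x) =
          A.filter (fun x => c < f x) ∪ B.filter (fun x => c < f x) :=
        Finset.filter_union _ _ _
      have hdf : Disjoint (A.filter (fun x => c < f x)) (B.filter (fun x => c < f x)) :=
        hd.mono (Finset.filter_subset _ _) (Finset.filter_subset _ _)
      have h1 : ((A ∪ B).filter (fun x => c < f x)).card = a + β := by
        rw [hfe, Finset.card_union_of_disjoint hdf, hfa, hfb]
      have h2 : (A ∪ B).card = A.card + B.card := Finset.card_union_of_disjoint hd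
      have hβB : β ≤ B.card := hfb ▸ Finset.card_filter_le _ _
      omega
    have hne : ((A ∪ B).filter (fun x => f x ≤ c)).Nonempty := by
      have hss : (A ∪ B).filter (fun x => c < f x) ⊂ A ∪ B :=
        (Finset.filter_subset _ _).ssubset_of_ne (by
          intro h; rw [h] at hcards; exact lt_irrefl _ hcards)
      obtain ⟨x, hxW, hxS⟩ := Finset.exists_of_ssubset hss
      refine ⟨x, Finset.mem_filter.mpr ⟨hxW, ?_⟩⟩
      by_contra h
      exact hxS (Finset.mem_filter.mpr ⟨hxW, lt_of_not_ge h⟩)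
    obtain ⟨x₀, hx₀W, hcx₀, c', hiff⟩ := sweep_step_up hinj hne
    have hx₀out : ∀ (C : Finset α), x₀ ∉ C.filter (fun x => c < f x) := by
      intro C h
      exact absurd (Finset.mem_filter.mp h).2 (not_lt.mpr hcx₀)
    rcases Finset.mem_union.mp hx₀W with hx₀A | hx₀B
    · -- the added point is in A: done
      have hAeq : A.filter (fun x => c' < f x) = insert x₀ (A.filter (fun x => c < f x)) := by
        ext x
        simp only [Finset.mem_insert, Finset.mem_filter]
        constructor
        · intro ⟨hxA, h⟩
          rcases (hiff x (Finset.mem_union_left _ hxA)).mp h with h | h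
          · exact Or.inr ⟨hxA, h⟩
          · exact Or.inl h
        · rintro (rfl | ⟨hxA, h⟩)
          · exact ⟨hx₀A, (hiff _ hx₀W).mpr (Or.inr rfl)⟩
          · exact ⟨hxA, (hiff x (Finset.mem_union_left _ hxA)).mpr (Or.inl h)⟩
      have hBeq : B.filter (fun x => c' < f x) = B.filter (fun x => c < f x) := by
        ext x
        simp only [Finset.mem_filter]
        constructor
        · intro ⟨hxB, h⟩
          rcases (hiff x (Finset.mem_union_right _ hxB)).mp h with h | h
          · exact ⟨hxB, h⟩
          · subst h; exact absurd hxB (Finset.disjoint_left.mp hd hx₀A)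
        · intro ⟨hxB, h⟩
          exact ⟨hxB, (hiff x (Finset.mem_union_right _ hxB)).mpr (Or.inl h)⟩
      refine ⟨c', ?_, ?_⟩
      · rw [hAeq, Finset.card_insert_of_notMem (hx₀out A), hfa]
      · rw [hBeq, hfb]; exact hβ
    · -- the added point is in B: recurse
      have hAeq : A.filter (fun x => c' < f x) = A.filter (fun x => c < f x) := by
        ext x
        simp only [Finset.mem_filter]
        constructor
        · intro ⟨hxA, h⟩
          rcases (hiff x (Finset.mem_union_left _ hxA)).mp h with h | h
          · exact ⟨hxA, h⟩
          · subst h; exact absurd hxA (Finset.disjoint_right.mp hd hx₀B)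
        · intro ⟨hxA, h⟩
          exact ⟨hxA, (hiff x (Finset.mem_union_left _ hxA)).mpr (Or.inl h)⟩
      have hBeq : B.filter (fun x => c' < f x) = insert x₀ (B.filter (fun x => c < f x)) := by
        ext x
        simp only [Finset.mem_insert, Finset.mem_filter]
        constructor
        · intro ⟨hxB, h⟩
          rcases (hiff x (Finset.mem_union_right _ hxB)).mp h with h | h
          · exact Or.inr ⟨hxB, h⟩
          · exact Or.inl h
        · rintro (rfl | ⟨hxB, h⟩)
          · exact ⟨hx₀B, (hiff _ hx₀W).mpr (Or.inr rfl)⟩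
          · exact ⟨hxB, (hiff x (Finset.mem_union_right _ hxB)).mpr (Or.inl h)⟩
      have hfa' : (A.filter (fun x => c' < f x)).card = a := by rw [hAeq]; exact hfa
      have hfb' : (B.filter (fun x => c' < f x)).card = β + 1 := by
        rw [hBeq, Finset.card_insert_of_notMem (hx₀out B), hfb]
      have hβ1B : β + 1 ≤ B.card := hfb' ▸ Finset.card_filter_le _ _
      exact ih (B.card - (β + 1)) (by omega) (β + 1) c' rfl hfa' hfb' (by omega)

end Sweep

section Generic

/-- Genericity/perturbation lemma: any open halfplane can be perturbed so that the linear
functional is injective on `A ∪ B` while the sets of points of `A` and `B` strictly inside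
are unchanged. -/
lemma exists_generic (A B : Finset (EuclideanSpace ℝ (Fin 2)))
    (v : EuclideanSpace ℝ (Fin 2)) (hv : v ≠ 0) (c : ℝ) :
    ∃ (v' : EuclideanSpace ℝ (Fin 2)) (c' : ℝ), v' ≠ 0 ∧
      (∀ x ∈ A ∪ B, ∀ y ∈ A ∪ B, ⟪x, v'⟫ = ⟪y, v'⟫ → x = y) ∧
      A.filter (fun x => c' < ⟪x, v'⟫) = A.filter (fun x => c < ⟪x, v⟫) ∧
      B.filter (fun x => c' < ⟪x, v'⟫) = B.filter (fun x => c < ⟪x, v⟫) := by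
  classical
  set W := A ∪ B with hW
  -- Step 1: move c slightly up so that no point lies on the boundary
  obtain ⟨c₁, hc₁⟩ : ∃ c₁ : ℝ, ∀ x ∈ W, (c₁ < ⟪x, v⟫ ↔ c < ⟪x, v⟫) ∧ ⟪x, v⟫ ≠ c₁ := by
    set P := (W.filter (fun x => c < ⟪x, v⟫)).image (fun x => ⟪x, v⟫) with hP
    by_cases hPne : P.Nonempty
    · have hminP : c < P.min' hPne := by
        obtain ⟨x, hx, hxe⟩ := Finset.mem_image.mp (P.min'_mem hPne)
        rw [← hxe]
        exact (Finset.mem_filter.mp hx).2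
      refine ⟨(c + P.min' hPne) / 2, fun x hx => ?_⟩
      by_cases h : c < ⟪x, v⟫
      · have : P.min' hPne ≤ ⟪x, v⟫ :=
          Finset.min'_le _ _ (Finset.mem_image.mpr ⟨x, Finset.mem_filter.mpr ⟨hx, h⟩, rfl⟩)
        constructor
        · constructor <;> intro <;> [exact h; linarith]
        · intro he; rw [he] at this; linarith
      · push_neg at h
        constructor
        · constructor <;> intro h2 <;> linarith
        · intro he; rw [he] at h; linarith
    · refine ⟨c + 1, fun x hx => ?_⟩
      have h : ¬ c < ⟪x, v⟫ := by
        intro h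
        exact hPne ⟨⟪x, v⟫, Finset.mem_image.mpr ⟨x, Finset.mem_filter.mpr ⟨hx, h⟩, rfl⟩⟩
      push_neg at h
      constructor
      · constructor <;> intro h2 <;> linarith
      · intro he; linarith
  -- Step 2: a perpendicular direction
  set u : EuclideanSpace ℝ (Fin 2) := !₂[-(v 1), v 0] with hu
  have hinner : ∀ x y : EuclideanSpace ℝ (Fin 2), ⟪x, y⟫ = x 0 * y 0 + x 1 * y 1 := by
    intro x y
    simp [PiLp.inner_apply, RCLike.inner_apply, Fin.sum_univ_two]; ring
  have hvu : ⟪v, u⟫ = 0 := by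
    rw [hinner]
    show v 0 * (-(v 1)) + v 1 * (v 0) = 0
    ring
  have hvv : ⟪v, v⟫ ≠ 0 := by
    intro h
    exact hv (inner_self_eq_zero.mp h)
  have hkey : ∀ d : EuclideanSpace ℝ (Fin 2), ⟪d, v⟫ = 0 → ⟪d, u⟫ = 0 → d = 0 := by
    intro d h1 h2
    rw [hinner] at h1
    rw [hinner] at h2
    have h2' : d 0 * (-(v 1)) + d 1 * (v 0) = 0 := h2
    have hvsum : v 0 * v 0 + v 1 * v 1 ≠ 0 := by
      have := hvv
      rw [hinner] at this
      exact this
    have hd0 : d 0 = 0 := by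
      have : d 0 * (v 0 * v 0 + v 1 * v 1) = 0 := by linear_combination v 0 * h1 - v 1 * h2'
      exact (mul_eq_zero.mp this).resolve_right hvsum
    have hd1 : d 1 = 0 := by
      have : d 1 * (v 0 * v 0 + v 1 * v 1) = 0 := by linear_combination v 1 * h1 + v 0 * h2'
      exact (mul_eq_zero.mp this).resolve_right hvsum
    ext i
    fin_cases i <;> simpa [hd0, hd1]
  -- Step 3: choose δ
  set Dbad : Finset ℝ :=
    (W ×ˢ W).image (fun p => -(⟪p.1 - p.2, v⟫) / ⟪p.1 - p.2, u⟫) with hDbad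
  by_cases hWne : W.Nonempty
  · set ε : ℝ := (W.image (fun x => |⟪x, v⟫ - c₁| / (|⟪x, u⟫| + 1))).min'
        (hWne.image _) with hε
    have hεpos : 0 < ε := by
      rw [hε]
      refine (Finset.lt_min'_iff _ _).mpr fun y hy => ?_
      obtain ⟨x, hx, rfl⟩ := Finset.mem_image.mp hy
      have h1 : ⟪x, v⟫ ≠ c₁ := (hc₁ x hx).2
      have h2 : 0 < |⟪x, v⟫ - c₁| := abs_pos.mpr (sub_ne_zero.mpr h1)
      have h3 : 0 < |⟪x, u⟫| + 1 := by positivity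
      positivity
    obtain ⟨δ, hδI, hδbad⟩ := (Set.Ioo_infinite hεpos).exists_notMem_finset Dbad
    obtain ⟨hδ0, hδε⟩ := hδI
    have hsame : ∀ x ∈ W, (c₁ < ⟪x, v + δ • u⟫ ↔ c < ⟪x, v⟫) := by
      intro x hxW
      have hbound : |δ * ⟪x, u⟫| < |⟪x, v⟫ - c₁| := by
        have hmem : |⟪x, v⟫ - c₁| / (|⟪x, u⟫| + 1) ∈
            W.image (fun x => |⟪x, v⟫ - c₁| / (|⟪x, u⟫| + 1)) :=
          Finset.mem_image.mpr ⟨x, hxW, rfl⟩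
        have hle : ε ≤ |⟪x, v⟫ - c₁| / (|⟪x, u⟫| + 1) := Finset.min'_le _ _ hmem
        have h3 : (0:ℝ) < |⟪x, u⟫| + 1 := by positivity
        have h4 : |δ * ⟪x, u⟫| = δ * |⟪x, u⟫| := by
          rw [abs_mul, abs_of_pos hδ0]
        rw [h4]
        calc δ * |⟪x, u⟫| ≤ δ * (|⟪x, u⟫| + 1) := by nlinarith
          _ < ε * (|⟪x, u⟫| + 1) := by nlinarith
          _ ≤ (|⟪x, v⟫ - c₁| / (|⟪x, u⟫| + 1)) * (|⟪x, u⟫| + 1) := by nlinarith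
          _ = |⟪x, v⟫ - c₁| := by field_simp
      have hiv : ⟪x, v + δ • u⟫ = ⟪x, v⟫ + δ * ⟪x, u⟫ := by
        rw [inner_add_right, real_inner_smul_right]
      obtain ⟨habs1, habs2⟩ := abs_lt.mp hbound
      rw [hiv, ← (hc₁ x hxW).1]
      have hne := (hc₁ x hxW).2
      constructor
      · intro h
        by_contra hcon
        push_neg at hcon
        have h5 : ⟪x, v⟫ < c₁ := lt_of_le_of_ne hcon hne
        rw [abs_of_neg (by linarith : ⟪x, v⟫ - c₁ < 0)] at habs2
        linarith
      · intro h
        rw [abs_of_pos (by linarith : (0:ℝ) < ⟪x, v⟫ - c₁)] at habs1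
        linarith
    refine ⟨v + δ • u, c₁, ?_, ?_, ?_, ?_⟩
    · -- v' ≠ 0
      intro h
      apply hvv
      have : ⟪v, v + δ • u⟫ = 0 := by rw [h, inner_zero_right]
      rw [inner_add_right, real_inner_smul_right, hvu] at this
      linarith [this]
    · -- injectivity
      intro x hx y hy hxy
      by_contra hne
      have hd : ⟪x - y, v + δ • u⟫ = 0 := by
        rw [inner_sub_left]
        rw [hxy]
        ring
      rw [inner_add_right, real_inner_smul_right] at hd
      rw [inner_sub_left, inner_sub_left] at hd
      by_cases hdu : ⟪x, u⟫ - ⟪y, u⟫ = 0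
      · -- then ⟪x - y, u⟫ = 0 and ⟪x - y, v⟫ = 0, so x = y
        apply hne
        have hdv : ⟪x, v⟫ - ⟪y, v⟫ = 0 := by
          rw [hdu] at hd; linarith
        have := hkey (x - y) (by rw [inner_sub_left]; exact hdv)
          (by rw [inner_sub_left]; exact hdu)
        exact sub_eq_zero.mp this
      · -- then δ ∈ Dbad
        apply hδbad
        rw [hDbad]
        apply Finset.mem_image.mpr
        refine ⟨(x, y), Finset.mem_product.mpr ⟨hx, hy⟩, ?_⟩
        show -(⟪x - y, v⟫) / ⟪x - y, u⟫ = δ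
        rw [inner_sub_left, inner_sub_left, div_eq_iff hdu]
        linarith
    · -- A filter
      refine Finset.filter_congr fun x hx => ?_
      exact hsame x (by rw [hW]; exact Finset.mem_union_left _ hx)
    · -- B filter
      refine Finset.filter_congr fun x hx => ?_
      exact hsame x (by rw [hW]; exact Finset.mem_union_right _ hx)
  · -- W empty: A and B empty, trivial
    rw [hW, Finset.not_nonempty_iff_eq_empty] at hWne
    have hAe : A = ∅ := Finset.union_eq_empty.mp hWne |>.1
    have hBe : B = ∅ := Finset.union_eq_empty.mp hWne |>.2
    subst hAe; subst hBe
    exact ⟨v, c, hv, fun x hx => absurd hx (by rw [hW]; simp), by simp, by simp⟩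

end Generic

theorem sign_agreement_observation
    (a b s t n k : ℕ) (ha : 1 ≤ a) (hb : 1 ≤ b) (hs : 1 ≤ s) (ht : 1 ≤ t)
    (hn : 1 ≤ n) (hst : s + t = n) (hk : k = a + b + 1)
    (A B : Finset (EuclideanSpace ℝ (Fin 2)))
    (hAB : Disjoint A B) (hgp : GenPos 2 (A ∪ B))
    (hA : A.card = n * a + s) (hB : B.card = n * b + t)
    -- no open halfplane contains exactly a points of A and exactly b+1 points of B
    (hno1 : ¬ ∃ (v : EuclideanSpace ℝ (Fin 2)) (c : ℝ), v ≠ 0 ∧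
        (A.filter (fun x => c < ⟪x, v⟫)).card = a ∧
        (B.filter (fun x => c < ⟪x, v⟫)).card = b + 1)
    -- no open halfplane contains exactly a+1 points of A and exactly b points of B
    (hno2 : ¬ ∃ (v : EuclideanSpace ℝ (Fin 2)) (c : ℝ), v ≠ 0 ∧
        (A.filter (fun x => c < ⟪x, v⟫)).card = a + 1 ∧
        (B.filter (fun x => c < ⟪x, v⟫)).card = b) :
    -- (i) ↔ (ii)
    ((∀ (v : EuclideanSpace ℝ (Fin 2)) (c : ℝ), v ≠ 0 →
        (A.filter (fun x => c < ⟪x, v⟫)).card = a →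
        (B.filter (fun x => c < ⟪x, v⟫)).card < b + 1)
      ↔ (∀ (v : EuclideanSpace ℝ (Fin 2)) (c : ℝ), v ≠ 0 →
        (A.filter (fun x => c < ⟪x, v⟫)).card = a + 1 →
        (B.filter (fun x => c < ⟪x, v⟫)).card < b)) := by
  push_neg at hno1 hno2
  constructor
  · -- (i) → (ii)
    intro h1 v c hv hfa
    by_contra hcon
    push_neg at hcon
    obtain ⟨v', c', hv', hinj, hAeq, hBeq⟩ := exists_generic A B v hv c
    have hfa' : (A.filter (fun x => c' < ⟪x, v'⟫)).card = a + 1 := by rw [hAeq]; exact hfa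
    have hfb' : b ≤ (B.filter (fun x => c' < ⟪x, v'⟫)).card := by rw [hBeq]; exact hcon
    have hne : (B.filter (fun x => c' < ⟪x, v'⟫)).card ≠ b := hno2 v' c' hv' hfa'
    have hfb'' : b + 1 ≤ (B.filter (fun x => c' < ⟪x, v'⟫)).card := by omega
    have hno : ∀ c₂ : ℝ, ¬((A.filter (fun x => c₂ < ⟪x, v'⟫)).card = a + 1 ∧
        (B.filter (fun x => c₂ < ⟪x, v'⟫)).card = b) := by
      intro c₂ ⟨h1', h2'⟩
      exact hno2 v' c₂ hv' h1' h2'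
    obtain ⟨c'', hca, hcb⟩ := sweep_shrink hAB hinj hno
      ((B.filter (fun x => c' < ⟪x, v'⟫)).card) c' hfa' rfl hfb''
    have := h1 v' c'' hv' hca
    omega
  · -- (ii) → (i)
    intro h2 v c hv hfa
    by_contra hcon
    push_neg at hcon
    obtain ⟨v', c', hv', hinj, hAeq, hBeq⟩ := exists_generic A B v hv c
    have hfa' : (A.filter (fun x => c' < ⟪x, v'⟫)).card = a := by rw [hAeq]; exact hfa
    have hfb' : b + 1 ≤ (B.filter (fun x => c' < ⟪x, v'⟫)).card := by rw [hBeq]; exact hcon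
    have hcard : a + 1 ≤ A.card := by
      rw [hA]
      have : a ≤ n * a := Nat.le_mul_of_pos_left a hn
      omega
    obtain ⟨c'', hca, hcb⟩ := sweep_grow hAB hinj hcard
      (B.card - (B.filter (fun x => c' < ⟪x, v'⟫)).card)
      ((B.filter (fun x => c' < ⟪x, v'⟫)).card) c' rfl hfa' rfl hfb'
    have := h2 v' c'' hv' hca
    omega
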